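/- Let N ≥ 2, c > 0, b ∈ (0,1), and b₁ = (1−b)/N. Let A be the N×N real matrix whose first column is (b₁, …, b₁, b₁+b)ᵀ, with A_{i,i+1} = 1 for 1 ≤ i ≤ N−1 and all other entries 0. If x ∈ ℝ^N satisfies A x = x and Σₙ xₙ = c, then x = x*, where x*_n = (b + (N−n+1)(1−b)/N) · c / (Nb + (N+1)(1−b)/2). -/

import Mathlib

/-- Uniqueness of the fixed point of the AIMD index-policy dynamics: any vector
`x` with `A x = x` and coordinate sum `c` equals the explicit vector `x*` with
`x*_n = (b + (N-n+1)(1-b)/N) · c / (Nb + (N+1)(1-b)/2)`.  (Coordinates are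
indexed by `Fin N`, the coordinate `i` corresponding to `n = i + 1`.) -/
theorem aimd_fixed_point_unique
    (N : ℕ) (hN : 2 ≤ N) (c b : ℝ) (hc : 0 < c) (hb : b ∈ Set.Ioo (0 : ℝ) 1)
    (b₁ : ℝ) (hb₁ : b₁ = (1 - b) / N)
    (A : Matrix (Fin N) (Fin N) ℝ)
    (hA : ∀ i j : Fin N, A i j =
      if (j : ℕ) = 0 then (if (i : ℕ) = N - 1 then b₁ + b else b₁)
      else if (j : ℕ) = (i : ℕ) + 1 then 1 else 0)
    (xstar : Fin N → ℝ)
    (hxstar : ∀ i : Fin N, xstar i =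
      (b + ((N : ℝ) - (i : ℕ)) * (1 - b) / N) * c
        / ((N : ℝ) * b + ((N : ℝ) + 1) * (1 - b) / 2))
    (x : Fin N → ℝ) (hfix : A.mulVec x = x) (hsum : ∑ i, x i = c) :
    x = xstar := by
  obtain ⟨hb0, hb1⟩ := hb
  have hNpos : 0 < N := by omega
  set z0 : Fin N := ⟨0, hNpos⟩ with hz0
  -- last-row recurrence
  have hlast : x ⟨N - 1, by omega⟩ = (b₁ + b) * x z0 := by
    have h := congrFun hfix (⟨N - 1, by omega⟩ : Fin N)
    have hAx : (A.mulVec x) (⟨N - 1, by omega⟩ : Fin N)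
        = ∑ j, A (⟨N - 1, by omega⟩ : Fin N) j * x j := rfl
    rw [hAx] at h
    have hfun : ∀ j : Fin N, A (⟨N - 1, by omega⟩ : Fin N) j * x j
        = if j = z0 then (b₁ + b) * x z0 else 0 := by
      intro j
      rw [hA]
      by_cases hj0 : (j : ℕ) = 0
      · have hj : j = z0 := Fin.ext hj0
        subst hj
        simp [hj0]
      · have hj : j ≠ z0 := by
          intro hh; exact hj0 (by rw [hh])
        have hj1 : (j : ℕ) ≠ (N - 1) + 1 := by
          have := j.isLt; omega
        simp [hj0, hj, hj1]
    rw [Finset.sum_congr rfl (fun j _ => hfun j)] at h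
    rw [Finset.sum_ite_eq' Finset.univ z0 (fun _ => (b₁ + b) * x z0)] at h
    simpa using h.symm
  -- generic-row recurrence
  have hstep : ∀ i : Fin N, ∀ h : (i : ℕ) + 1 < N,
      x i = b₁ * x z0 + x ⟨(i : ℕ) + 1, h⟩ := by
    intro i hi
    have h := congrFun hfix i
    have hAx : (A.mulVec x) i = ∑ j, A i j * x j := rfl
    rw [hAx] at h
    have hiN : (i : ℕ) ≠ N - 1 := by omega
    set i1 : Fin N := ⟨(i : ℕ) + 1, hi⟩ with hi1
    have hfun : ∀ j : Fin N, A i j * x j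
        = (if j = z0 then b₁ * x z0 else 0) + (if j = i1 then x i1 else 0) := by
      intro j
      rw [hA]
      by_cases hj0 : (j : ℕ) = 0
      · have hj : j = z0 := Fin.ext hj0
        subst hj
        have : z0 ≠ i1 := by
          intro hh
          have : (z0 : ℕ) = (i1 : ℕ) := by rw [hh]
          simp [hz0, hi1] at this
        simp [hiN, this, hj0]
      · have hj : j ≠ z0 := by intro hh; exact hj0 (by rw [hh])
        by_cases hj1 : (j : ℕ) = (i : ℕ) + 1
        · have hji : j = i1 := Fin.ext (by simp [hi1, hj1])
          subst hji
          simp [hj0, hj, hj1]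
        · have hji : j ≠ i1 := by
            intro hh; exact hj1 (by rw [hh])
          simp [hj0, hj, hj1, hji]
    rw [Finset.sum_congr rfl (fun j _ => hfun j), Finset.sum_add_distrib,
      Finset.sum_ite_eq' Finset.univ z0 (fun _ => b₁ * x z0),
      Finset.sum_ite_eq' Finset.univ i1 (fun _ => x i1)] at h
    simpa using h.symm
  -- downward induction
  have main : ∀ k : ℕ, k ≤ N - 1 →
      x ⟨N - 1 - k, by omega⟩ = (b + ((N : ℝ) - ((N - 1 - k : ℕ) : ℝ)) * b₁) * x z0 := by
    intro k
    induction k with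
    | zero =>
      intro _
      have hc1 : ((N - 1 - 0 : ℕ) : ℝ) = (N : ℝ) - 1 := by
        simp; rw [Nat.cast_sub (by omega)]; simp
      have he : (⟨N - 1 - 0, by omega⟩ : Fin N) = ⟨N - 1, by omega⟩ := Fin.ext (by simp)
      rw [he, hlast, hc1]
      ring
    | succ k ih =>
      intro hk
      have hk' : k ≤ N - 1 := by omega
      have hidx : (N - 1 - (k + 1)) + 1 = N - 1 - k := by omega
      have hlt : (N - 1 - (k + 1)) + 1 < N := by omega
      have h1 := hstep ⟨N - 1 - (k + 1), by omega⟩ hlt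
      have h2 : (⟨(N - 1 - (k + 1)) + 1, hlt⟩ : Fin N) = ⟨N - 1 - k, by omega⟩ :=
        Fin.ext (by simp [hidx])
      rw [h2] at h1
      rw [h1, ih hk']
      have hc1 : ((N - 1 - k : ℕ) : ℝ) = ((N - 1 - (k + 1) : ℕ) : ℝ) + 1 := by
        rw [show N - 1 - k = (N - 1 - (k + 1)) + 1 by omega]
        push_cast; ring
      rw [hc1]
      ring
  have hall : ∀ i : Fin N, x i = (b + ((N : ℝ) - (i : ℕ)) * b₁) * x z0 := by
    intro i
    have hk : N - 1 - (N - 1 - (i : ℕ)) = (i : ℕ) := by have := i.isLt; omega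
    have := main (N - 1 - (i : ℕ)) (by omega)
    have h2 : (⟨N - 1 - (N - 1 - (i : ℕ)), by omega⟩ : Fin N) = i := Fin.ext (by simp [hk])
    rw [h2, hk] at this
    exact this
  -- sum of indices
  have hsum_id : (∑ i : Fin N, ((i : ℕ) : ℝ)) * 2 = (N : ℝ) * ((N : ℝ) - 1) := by
    rw [Fin.sum_univ_eq_sum_range (fun i => ((i : ℕ) : ℝ)) N]
    have := Finset.sum_range_id_mul_two N
    have hcast := congrArg (Nat.cast : ℕ → ℝ) this
    push_cast [Nat.cast_sub (by omega : 1 ≤ N)] at hcast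
    linarith [hcast]
  set D : ℝ := (N : ℝ) * b + ((N : ℝ) + 1) * (1 - b) / 2 with hD
  have hNR : (0 : ℝ) < (N : ℝ) := by exact_mod_cast hNpos
  have hDpos : 0 < D := by
    apply add_pos
    · exact mul_pos hNR hb0
    · apply div_pos
      · exact mul_pos (by linarith) (by linarith)
      · norm_num
  have hsum2 : D * x z0 = c := by
    rw [← hsum, Finset.sum_congr rfl (fun i _ => hall i)]
    rw [← Finset.sum_mul]
    congr 1
    have : ∑ i : Fin N, (b + ((N : ℝ) - (i : ℕ)) * b₁)
        = (N : ℝ) * b + ((N : ℝ) * (N : ℝ) - (∑ i : Fin N, ((i : ℕ) : ℝ))) * b₁ := by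
      rw [Finset.sum_add_distrib, ← Finset.sum_mul, Finset.sum_sub_distrib]
      simp [Finset.sum_const, Fintype.card_fin, nsmul_eq_mul, mul_comm]
    rw [this, hb₁, hD]
    have hs : (∑ i : Fin N, ((i : ℕ) : ℝ)) = (N : ℝ) * ((N : ℝ) - 1) / 2 := by
      linarith [hsum_id]
    rw [hs]
    field_simp
    ring
  have hx0 : x z0 = c / D := by
    field_simp at hsum2 ⊢
    linarith [hsum2]
  funext i
  rw [hall i, hxstar i, hx0, hb₁]
  have hDne : D ≠ 0 := ne_of_gt hDpos
  have hNne : (N : ℝ) ≠ 0 := ne_of_gt hNR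
  field_simp
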